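/- Let F be a nonzero polynomial in n variables over a finite field K of total degree at most d with d < #K. If a point a is chosen uniformly at random from K^n, the probability that F(a) = 0 is at most d / #K. -/

import Mathlib

open MvPolynomial Finset

lemma sz_count (K : Type*) [Field K] [Fintype K] [DecidableEq K] :
    ∀ (n : ℕ) (F : MvPolynomial (Fin n) K), F ≠ 0 →
      (univ.filter fun a : Fin n → K => eval a F = 0).card * Fintype.card K
        ≤ F.totalDegree * Fintype.card K ^ n := by
  intro n
  induction n with
  | zero =>
      intro F hF
      have hC := MvPolynomial.eq_C_of_isEmpty F
      have : (univ.filter fun a : Fin 0 → K => eval a F = 0) = ∅ := by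
        apply Finset.filter_false_of_mem
        intro a _ ha
        rw [hC, eval_C] at ha
        exact hF (by rw [hC, ha, map_zero])
      rw [this]
      simpa using Nat.zero_le _
  | succ n ih =>
      intro F hF
      set q := Fintype.card K with hq
      set p := MvPolynomial.finSuccEquiv K n F with hp
      have hp0 : p ≠ 0 := by
        intro h
        exact hF ((MvPolynomial.finSuccEquiv K n).injective (by simp [← hp, h]))
      set k := p.natDegree with hk
      set g := p.coeff k with hg
      have hg0 : g ≠ 0 := Polynomial.leadingCoeff_ne_zero.mpr hp0
      have hdeg : g.totalDegree + k ≤ F.totalDegree :=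
        MvPolynomial.totalDegree_coeff_finSuccEquiv_add_le F k hg0
      -- split the count
      have key : (univ.filter fun a : Fin (n+1) → K => eval a F = 0).card
          ≤ (univ.filter fun x : Fin n → K => eval x g = 0).card * q + q ^ n * k := by
        have hcard : (univ.filter fun a : Fin (n+1) → K => eval a F = 0).card
            = ∑ x : Fin n → K, (univ.filter fun y : K => eval (Fin.cons y x) F = 0).card := by
          rw [Finset.card_filter, ← Equiv.sum_comp (Fin.consEquiv fun _ : Fin (n+1) => K)
              (fun a : Fin (n+1) → K => if eval a F = 0 then (1:ℕ) else 0),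
            Fintype.sum_prod_type, Finset.sum_comm]
          simp only [Fin.consEquiv, Equiv.coe_fn_mk]
          congr 1
          ext x
          rw [Finset.card_filter]
          rfl
        rw [hcard]
        have hbound : ∀ x : Fin n → K,
            (univ.filter fun y : K => eval (Fin.cons y x) F = 0).card
              ≤ if eval x g = 0 then q else k := by
          intro x
          split_ifs with hgx
          · exact le_trans (Finset.card_filter_le _ _) (by simp [hq])
          · have hmap : (p.map (eval x)).coeff k ≠ 0 := by
              rwa [Polynomial.coeff_map]
            have hmne : p.map (eval x) ≠ 0 := fun h => hmap (by simp [h])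
            have hsub : (univ.filter fun y : K => eval (Fin.cons y x) F = 0)
                ⊆ (p.map (eval x)).roots.toFinset := by
              intro y hy
              simp only [Finset.mem_filter] at hy
              rw [Multiset.mem_toFinset, Polynomial.mem_roots hmne,
                Polynomial.IsRoot.def, ← MvPolynomial.eval_eq_eval_mv_eval']
              exact hy.2
            calc (univ.filter fun y : K => eval (Fin.cons y x) F = 0).card
                ≤ (p.map (eval x)).roots.toFinset.card := Finset.card_le_card hsub
              _ ≤ Multiset.card (p.map (eval x)).roots := Multiset.toFinset_card_le _
              _ ≤ (p.map (eval x)).natDegree := Polynomial.card_roots' _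
              _ ≤ k := Polynomial.natDegree_map_le
        calc ∑ x : Fin n → K, (univ.filter fun y : K => eval (Fin.cons y x) F = 0).card
            ≤ ∑ x : Fin n → K, (if eval x g = 0 then q else k) :=
              Finset.sum_le_sum fun x _ => hbound x
          _ ≤ (univ.filter fun x : Fin n → K => eval x g = 0).card * q + q ^ n * k := by
              rw [Finset.sum_ite]
              simp only [Finset.sum_const, smul_eq_mul]
              gcongr
              calc (Finset.filter (fun x => ¬eval x g = 0) univ).card
                    ≤ (univ : Finset (Fin n → K)).card := Finset.card_filter_le _ _
                  _ = q ^ n := by simp [hq, Fintype.card_fun]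
      calc (univ.filter fun a : Fin (n+1) → K => eval a F = 0).card * q
          ≤ ((univ.filter fun x : Fin n → K => eval x g = 0).card * q + q ^ n * k) * q := by
            gcongr
        _ = (univ.filter fun x : Fin n → K => eval x g = 0).card * q * q + k * q ^ (n+1) := by
            ring
        _ ≤ g.totalDegree * q ^ n * q + k * q ^ (n+1) := by
            exact Nat.add_le_add_right (Nat.mul_le_mul_right q (ih g hg0)) _
        _ = (g.totalDegree + k) * q ^ (n+1) := by ring
        _ ≤ F.totalDegree * q ^ (n+1) := by gcongr

/-- Probability form of the Zippel–Schwartz lemma over a finite field. -/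
theorem stmt1 (K : Type*) [Field K] [Fintype K] (n d : ℕ)
    (F : MvPolynomial (Fin n) K) (hF : F ≠ 0) (hdeg : F.totalDegree ≤ d)
    (hd : d < Fintype.card K) :
    (Nat.card {a : Fin n → K // MvPolynomial.eval a F = 0} : ℝ) / (Fintype.card K : ℝ) ^ n
      ≤ (d : ℝ) / (Fintype.card K : ℝ) := by
  classical
  have hsz := sz_count K n F hF
  have hcard : Nat.card {a : Fin n → K // MvPolynomial.eval a F = 0}
      = (Finset.univ.filter fun a : Fin n → K => eval a F = 0).card := by
    rw [Nat.card_eq_fintype_card, Fintype.card_subtype]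
  have hNq : (Nat.card {a : Fin n → K // MvPolynomial.eval a F = 0}) * Fintype.card K
      ≤ d * Fintype.card K ^ n := by
    rw [hcard]
    exact le_trans hsz (Nat.mul_le_mul_right _ hdeg)
  have hq0 : (0:ℝ) < (Fintype.card K : ℝ) := by
    exact_mod_cast Fintype.card_pos
  rw [div_le_div_iff₀ (by positivity) hq0]
  calc (Nat.card {a : Fin n → K // MvPolynomial.eval a F = 0} : ℝ) * Fintype.card K
      ≤ ((d * Fintype.card K ^ n : ℕ) : ℝ) := by exact_mod_cast hNq
    _ = (d : ℝ) * (Fintype.card K : ℝ) ^ n := by push_cast; ring
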